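/- (Lemma 1, exact flow contraction.) Suppose the potential U : ℝᵈ → ℝ₊ is twice continuously differentiable with globally β-Lipschitz gradient, and U is α-strongly convex on a compact set S of positive Lebesgue measure. Then for any compact set A ⊂ S × S × ℝᵈ, there exists a trajectory length T > 0 such that for any t ∈ (0, T], there exists ρ ∈ [0, 1) with |Φₜ°(q₀¹, p₀) - Φₜ°(q₀², p₀)| ≤ ρ|q₀¹ - q₀²| for all (q₀¹, q₀², p₀) ∈ A, where Φₜ° denotes the position component of the Hamiltonian flow at time t. -/

import Mathlib

open Real MeasureTheory
open scoped RealInnerProductSpace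


theorem le_of_deriv_nonpos' (f f' : ℝ → ℝ) (hf : ∀ s, HasDerivAt f (f' s) s) (a b : ℝ)
    (hab : a ≤ b) (h : ∀ s ∈ Set.Icc a b, f' s ≤ 0) : f b ≤ f a := by
  have := antitoneOn_of_deriv_nonpos (convex_Icc a b)
    (fun s hs => (hf s).continuousAt.continuousWithinAt)
    (fun s hs => (hf s).differentiableAt.differentiableWithinAt)
    (fun s hs => by
      rw [(hf s).deriv]
      exact h s (Set.mem_Icc_of_Ioo (by rwa [interior_Icc] at hs)))
  exact this (Set.left_mem_Icc.2 hab) (Set.right_mem_Icc.2 hab) hab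

theorem mvt_norm' {E : Type*} [NormedAddCommGroup E] [NormedSpace ℝ E]
    (f : ℝ → E) (f' : ℝ → E) (hf : ∀ s, HasDerivAt f (f' s) s) (t C : ℝ) (ht : 0 ≤ t)
    (h : ∀ s ∈ Set.Icc (0:ℝ) t, ‖f' s‖ ≤ C) : ‖f t - f 0‖ ≤ C * t := by
  have := (convex_Icc (0:ℝ) t).norm_image_sub_le_of_norm_hasDerivWithin_le
    (fun s hs => (hf s).hasDerivWithinAt) h (Set.left_mem_Icc.2 ht) (Set.right_mem_Icc.2 ht)
  rw [show t - (0:ℝ) = t by ring, Real.norm_of_nonneg ht] at this; exact this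

set_option maxHeartbeats 1000000 in
theorem second_diff {E : Type*} [NormedAddCommGroup E] [InnerProductSpace ℝ E] (gU : E → E) (hg : ContDiff ℝ 1 gU) (a v w : E) (ε : ℝ)
    (hH : ∀ t ∈ Set.Icc (0:ℝ) 1,
      ‖fderiv ℝ gU (a + t•v + w) - fderiv ℝ gU (a + t•v)‖ ≤ ε) :
    |⟪v, gU (a + v + w) - gU (a + v)⟫ - ⟪v, gU (a + w) - gU a⟫| ≤ ε * ‖v‖^2 := by
  set F : ℝ → ℝ := fun t => ⟪v, gU (a + t•v + w)⟫ - ⟪v, gU (a + t•v)⟫ with hF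
  have hder : ∀ t : ℝ, HasDerivAt F
      (⟪v, (fderiv ℝ gU (a + t•v + w)) v⟫ - ⟪v, (fderiv ℝ gU (a + t•v)) v⟫) t := by
    intro t
    have hγ1 : HasDerivAt (fun s : ℝ => a + s•v + w) v t := by
      simpa using (((hasDerivAt_id t).smul_const v).const_add a).add_const w
    have hγ2 : HasDerivAt (fun s : ℝ => a + s•v) v t := by
      simpa using ((hasDerivAt_id t).smul_const v).const_add a
    have h1 : HasDerivAt (fun s : ℝ => gU (a + s•v + w)) ((fderiv ℝ gU (a + t•v + w)) v) t :=
      ((hg.differentiable one_ne_zero _).hasFDerivAt).comp_hasDerivAt t hγ1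
    have h2 : HasDerivAt (fun s : ℝ => gU (a + s•v)) ((fderiv ℝ gU (a + t•v)) v) t :=
      ((hg.differentiable one_ne_zero _).hasFDerivAt).comp_hasDerivAt t hγ2
    have i1 := (hasDerivAt_const t v).inner ℝ h1
    have i2 := (hasDerivAt_const t v).inner ℝ h2
    have i3 := i1.sub i2
    simp only [inner_zero_left, inner_zero_right, zero_add, add_zero] at i3
    exact i3
  have hbd : ∀ s ∈ Set.Icc (0:ℝ) 1,
      ‖⟪v, (fderiv ℝ gU (a + s•v + w)) v⟫ - ⟪v, (fderiv ℝ gU (a + s•v)) v⟫‖ ≤ ε * ‖v‖^2 := by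
    intro s hs
    have : ⟪v, (fderiv ℝ gU (a + s•v + w)) v⟫ - ⟪v, (fderiv ℝ gU (a + s•v)) v⟫
        = ⟪v, (fderiv ℝ gU (a + s•v + w) - fderiv ℝ gU (a + s•v)) v⟫ := by
      simp [inner_sub_right]
    rw [this]
    calc ‖⟪v, (fderiv ℝ gU (a + s•v + w) - fderiv ℝ gU (a + s•v)) v⟫‖
        ≤ ‖v‖ * ‖(fderiv ℝ gU (a + s•v + w) - fderiv ℝ gU (a + s•v)) v‖ :=
          norm_inner_le_norm _ _
      _ ≤ ‖v‖ * (‖fderiv ℝ gU (a + s•v + w) - fderiv ℝ gU (a + s•v)‖ * ‖v‖) := by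
          gcongr; exact ContinuousLinearMap.le_opNorm _ _
      _ ≤ ‖v‖ * (ε * ‖v‖) := by
          have := hH s hs
          have h2 : ‖fderiv ℝ gU (a + s•v + w) - fderiv ℝ gU (a + s•v)‖ * ‖v‖ ≤ ε * ‖v‖ :=
            mul_le_mul_of_nonneg_right this (norm_nonneg v)
          exact mul_le_mul_of_nonneg_left h2 (norm_nonneg v)
      _ = ε * ‖v‖^2 := by ring
  have := mvt_norm' F _ hder 1 (ε * ‖v‖^2) zero_le_one hbd
  rw [mul_one] at this
  have hval : F 1 - F 0 = ⟪v, gU (a + v + w) - gU (a + v)⟫ - ⟪v, gU (a + w) - gU a⟫ := by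
    simp only [hF, one_smul, zero_smul, add_zero, inner_sub_right]
  rw [hval] at this
  exact this


set_option maxHeartbeats 1000000 in
theorem aux_contract {E : Type*} [NormedAddCommGroup E] [InnerProductSpace ℝ E]
    (gU : E → E) (β Ce M δ₁ a : ℝ) (hβ : 0 < β) (ha : 0 < a) (hM : 0 ≤ M)
    (hCee : Real.exp (1 + β) ≤ Ce) (hCe1 : 1 ≤ Ce)
    (hLip : ∀ q q', ‖gU q - gU q'‖ ≤ β * ‖q - q'‖)
    (Q₁ Q₂ P₁ P₂ : ℝ → E)
    (hq1 : ∀ s, HasDerivAt Q₁ (P₁ s) s) (hq2 : ∀ s, HasDerivAt Q₂ (P₂ s) s)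
    (hp1 : ∀ s, HasDerivAt P₁ (-(gU (Q₁ s))) s) (hp2 : ∀ s, HasDerivAt P₂ (-(gU (Q₂ s))) s)
    (hinit : P₁ 0 = P₂ 0)
    (hMdev : ∀ s ∈ Set.Icc (0:ℝ) 1, ‖Q₂ s - Q₂ 0‖ ≤ M * s)
    (hc : ∀ w : E, ‖w‖ ≤ δ₁ →
      a * ‖Q₁ 0 - Q₂ 0‖^2 ≤ ⟪Q₁ 0 - Q₂ 0, gU (Q₁ 0 + w) - gU (Q₂ 0 + w)⟫)
    (t : ℝ) (ht0 : 0 ≤ t) (ht1 : t ≤ 1) (htδ : M * t ≤ δ₁)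
    (ht2 : β^2 * Ce * t^2 ≤ a/2) (ht3 : β^2 * Ce^2 * t^2 ≤ a/8) :
    ‖Q₁ t - Q₂ t‖^2 ≤ (1 - (a/8) * t^2) * ‖Q₁ 0 - Q₂ 0‖^2 := by
  set Δ : ℝ → E := fun s => Q₁ s - Q₂ s with hΔdef
  set δf : ℝ → E := fun s => P₁ s - P₂ s with hδfdef
  have hΔ' : ∀ s, HasDerivAt Δ (δf s) s := fun s => (hq1 s).sub (hq2 s)
  have hδ' : ∀ s, HasDerivAt δf (-(gU (Q₁ s) - gU (Q₂ s))) s := fun s => by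
    have := (hp1 s).sub (hp2 s)
    have he : -(gU (Q₁ s)) - -(gU (Q₂ s)) = -(gU (Q₁ s) - gU (Q₂ s)) := by abel
    rwa [he] at this
  have hδf0 : δf 0 = 0 := by simp [hδfdef, hinit]
  set g : ℝ → ℝ := fun s => ⟪Δ s, Δ s⟫ + ⟪δf s, δf s⟫ with hgdef
  have hg' : ∀ s, HasDerivAt g
      ((⟪Δ s, δf s⟫ + ⟪δf s, Δ s⟫) +
        (⟪δf s, -(gU (Q₁ s) - gU (Q₂ s))⟫ + ⟪-(gU (Q₁ s) - gU (Q₂ s)), δf s⟫)) s :=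
    fun s => ((hΔ' s).inner ℝ (hΔ' s)).add ((hδ' s).inner ℝ (hδ' s))
  have hgval : ∀ s, g s = ‖Δ s‖^2 + ‖δf s‖^2 := by
    intro s; simp [hgdef, real_inner_self_eq_norm_sq]
  have hg0 : g 0 = ‖Δ 0‖^2 := by rw [hgval, hδf0]; simp
  -- Gronwall
  have hgron : ∀ s ∈ Set.Icc (0:ℝ) 1, g s ≤ Ce * ‖Δ 0‖^2 := by
    intro s hs
    set ψ : ℝ → ℝ := fun u => Real.exp (-(1+β)*u) * g u with hψdef
    have hψ' : ∀ u, HasDerivAt ψ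
        (Real.exp (-(1+β)*u) * (-(1+β)) * g u +
          Real.exp (-(1+β)*u) * ((⟪Δ u, δf u⟫ + ⟪δf u, Δ u⟫) +
            (⟪δf u, -(gU (Q₁ u) - gU (Q₂ u))⟫ + ⟪-(gU (Q₁ u) - gU (Q₂ u)), δf u⟫))) u := by
      intro u
      have hexp : HasDerivAt (fun x : ℝ => Real.exp (-(1+β)*x)) (Real.exp (-(1+β)*u) * (-(1+β))) u := by
        have := ((hasDerivAt_id u).const_mul (-(1+β))).exp
        simpa [mul_comm] using this
      exact hexp.mul (hg' u)
    have hψle : ∀ u ∈ Set.Icc (0:ℝ) s, (Real.exp (-(1+β)*u) * (-(1+β)) * g u +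
        Real.exp (-(1+β)*u) * ((⟪Δ u, δf u⟫ + ⟪δf u, Δ u⟫) +
          (⟪δf u, -(gU (Q₁ u) - gU (Q₂ u))⟫ + ⟪-(gU (Q₁ u) - gU (Q₂ u)), δf u⟫))) ≤ 0 := by
      intro u _
      have h1 : ⟪Δ u, δf u⟫ ≤ ‖Δ u‖ * ‖δf u‖ := real_inner_le_norm _ _
      have h2 : ⟪δf u, Δ u⟫ ≤ ‖Δ u‖ * ‖δf u‖ := by
        rw [real_inner_comm]; exact h1
      have hD : ‖-(gU (Q₁ u) - gU (Q₂ u))‖ ≤ β * ‖Δ u‖ := by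
        rw [norm_neg]; exact hLip _ _
      have h3 : ⟪δf u, -(gU (Q₁ u) - gU (Q₂ u))⟫ ≤ β * ‖Δ u‖ * ‖δf u‖ := by
        calc ⟪δf u, -(gU (Q₁ u) - gU (Q₂ u))⟫ ≤ ‖δf u‖ * ‖-(gU (Q₁ u) - gU (Q₂ u))‖ :=
              real_inner_le_norm _ _
          _ ≤ ‖δf u‖ * (β * ‖Δ u‖) := by
              exact mul_le_mul_of_nonneg_left hD (norm_nonneg _)
          _ = β * ‖Δ u‖ * ‖δf u‖ := by ring
      have h4 : ⟪-(gU (Q₁ u) - gU (Q₂ u)), δf u⟫ ≤ β * ‖Δ u‖ * ‖δf u‖ := by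
        rw [real_inner_comm]; exact h3
      have hgu : g u = ‖Δ u‖^2 + ‖δf u‖^2 := hgval u
      have hexp_pos : 0 < Real.exp (-(1+β)*u) := Real.exp_pos _
      nlinarith [sq_nonneg (‖Δ u‖ - ‖δf u‖), norm_nonneg (Δ u), norm_nonneg (δf u),
        mul_pos hexp_pos hβ, sq_nonneg (‖Δ u‖ + ‖δf u‖)]
    have := le_of_deriv_nonpos' ψ _ hψ' 0 s hs.1 hψle
    have hψ0 : ψ 0 = g 0 := by simp [hψdef]
    rw [hψ0, hg0] at this
    have hexp_pos : 0 < Real.exp (-(1+β)*s) := Real.exp_pos _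
    have hψs : ψ s = Real.exp (-(1+β)*s) * g s := rfl
    rw [hψs] at this
    -- g s ≤ exp((1+β)s) * ‖Δ0‖² ≤ Ce * ‖Δ0‖²
    have h5 : g s ≤ Real.exp ((1+β)*s) * ‖Δ 0‖^2 := by
      have h' := mul_le_mul_of_nonneg_left this (le_of_lt (Real.exp_pos ((1+β)*s)))
      rw [← mul_assoc, ← Real.exp_add] at h'
      have hz : (1+β)*s + -(1+β)*s = 0 := by ring
      rw [hz, Real.exp_zero, one_mul] at h'
      exact h'
    have h6 : Real.exp ((1+β)*s) ≤ Ce := by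
      refine le_trans ?_ hCee
      apply Real.exp_le_exp.2
      nlinarith [hs.1, hs.2, hβ.le]
    calc g s ≤ Real.exp ((1+β)*s) * ‖Δ 0‖^2 := h5
      _ ≤ Ce * ‖Δ 0‖^2 := mul_le_mul_of_nonneg_right h6 (sq_nonneg _)
  have hCe0 : (0:ℝ) < Ce := lt_of_lt_of_le one_pos hCe1
  -- linear bounds
  have hΔle : ∀ s ∈ Set.Icc (0:ℝ) 1, ‖Δ s‖ ≤ Ce * ‖Δ 0‖ := by
    intro s hs
    have h1 : ‖Δ s‖^2 ≤ Ce * ‖Δ 0‖^2 := by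
      have := hgron s hs
      rw [hgval] at this
      nlinarith [sq_nonneg (‖δf s‖)]
    have h2 : ‖Δ s‖ ≤ Real.sqrt Ce * ‖Δ 0‖ := by
      have h3 := Real.sqrt_le_sqrt h1
      rwa [Real.sqrt_sq (norm_nonneg _), Real.sqrt_mul hCe0.le, Real.sqrt_sq (norm_nonneg _)] at h3
    have h4 : Real.sqrt Ce ≤ Ce := by
      have := Real.sqrt_le_sqrt (le_self_pow₀ hCe1 two_ne_zero)
      rwa [Real.sqrt_sq hCe0.le] at this
    exact le_trans h2 (mul_le_mul_of_nonneg_right h4 (norm_nonneg _))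
  have hδle : ∀ s ∈ Set.Icc (0:ℝ) 1, ‖δf s‖ ≤ β * Ce * ‖Δ 0‖ * s := by
    intro s hs
    have := mvt_norm' δf (fun u => -(gU (Q₁ u) - gU (Q₂ u))) hδ' s (β * Ce * ‖Δ 0‖) hs.1
      (fun u hu => by
        rw [norm_neg]
        calc ‖gU (Q₁ u) - gU (Q₂ u)‖ ≤ β * ‖Q₁ u - Q₂ u‖ := hLip _ _
          _ ≤ β * (Ce * ‖Δ 0‖) := by
              apply mul_le_mul_of_nonneg_left _ hβ.le
              exact hΔle u ⟨hu.1, le_trans hu.2 hs.2⟩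
          _ = β * Ce * ‖Δ 0‖ := by ring)
    rwa [hδf0, sub_zero] at this
  have hΔdev : ∀ s ∈ Set.Icc (0:ℝ) 1, ‖Δ s - Δ 0‖ ≤ β * Ce * ‖Δ 0‖ * s * s := by
    intro s hs
    exact mvt_norm' Δ δf hΔ' s (β * Ce * ‖Δ 0‖ * s) hs.1
      (fun u hu => le_trans (hδle u ⟨hu.1, le_trans hu.2 hs.2⟩)
        (by
          apply mul_le_mul_of_nonneg_left hu.2
          positivity))
  -- second derivative bound
  have hsec : ∀ s ∈ Set.Icc (0:ℝ) t, (a/2) * ‖Δ 0‖^2 ≤ ⟪Δ 0, gU (Q₁ s) - gU (Q₂ s)⟫ := by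
    intro s hs
    have hs1 : s ∈ Set.Icc (0:ℝ) 1 := ⟨hs.1, le_trans hs.2 ht1⟩
    set w : E := Q₂ s - Q₂ 0 with hwdef
    have hw : ‖w‖ ≤ δ₁ := by
      calc ‖w‖ ≤ M * s := hMdev s hs1
        _ ≤ M * t := mul_le_mul_of_nonneg_left hs.2 hM
        _ ≤ δ₁ := htδ
    have hQ2 : Q₂ s = Q₂ 0 + w := by simp [hwdef]
    set e : E := Δ s - Δ 0 with hedef
    have hQ1 : Q₁ s = Q₁ 0 + w + e := by
      simp only [hedef, hwdef, hΔdef]; abel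
    have hsplit : gU (Q₁ s) - gU (Q₂ s) =
        (gU (Q₁ 0 + w) - gU (Q₂ 0 + w)) + (gU (Q₁ s) - gU (Q₁ 0 + w)) := by
      rw [hQ2]; abel
    rw [hsplit, inner_add_right]
    have hc' := hc w hw
    have he : ‖e‖ ≤ β * Ce * ‖Δ 0‖ * s * s := hΔdev s hs1
    have herr : |⟪Δ 0, gU (Q₁ s) - gU (Q₁ 0 + w)⟫| ≤ ‖Δ 0‖ * (β * ‖e‖) := by
      calc |⟪Δ 0, gU (Q₁ s) - gU (Q₁ 0 + w)⟫| ≤ ‖Δ 0‖ * ‖gU (Q₁ s) - gU (Q₁ 0 + w)‖ :=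
            abs_real_inner_le_norm _ _
        _ ≤ ‖Δ 0‖ * (β * ‖Q₁ s - (Q₁ 0 + w)‖) :=
            mul_le_mul_of_nonneg_left (hLip _ _) (norm_nonneg _)
        _ = ‖Δ 0‖ * (β * ‖e‖) := by rw [hQ1]; congr 2; congr 1; abel
    have herr2 : -(β^2 * Ce * t^2 * ‖Δ 0‖^2) ≤ ⟪Δ 0, gU (Q₁ s) - gU (Q₁ 0 + w)⟫ := by
      have h1 : ‖Δ 0‖ * (β * ‖e‖) ≤ β^2 * Ce * t^2 * ‖Δ 0‖^2 := by
        have hss : s * s ≤ t^2 := by nlinarith [hs.1, hs.2]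
        have : β * ‖e‖ ≤ β * (β * Ce * ‖Δ 0‖ * t^2) := by
          apply mul_le_mul_of_nonneg_left _ hβ.le
          calc ‖e‖ ≤ β * Ce * ‖Δ 0‖ * s * s := he
            _ ≤ β * Ce * ‖Δ 0‖ * t^2 := by
                rw [mul_assoc]
                apply mul_le_mul_of_nonneg_left hss
                positivity
        nlinarith [norm_nonneg (Δ 0)]
      nlinarith [abs_le.1 herr]
    have hΔ0' : Δ 0 = Q₁ 0 - Q₂ 0 := rfl
    rw [hΔ0'] at herr2 ⊢
    nlinarith [herr2, hc', sq_nonneg (‖Q₁ 0 - Q₂ 0‖)]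
  -- integrate twice
  have hd1 : ∀ s ∈ Set.Icc (0:ℝ) t, ⟪Δ 0, δf s⟫ ≤ -((a/2) * ‖Δ 0‖^2 * s) := by
    intro s hs
    have key := le_of_deriv_nonpos' (fun u => ⟪Δ 0, δf u⟫ + (a/2) * ‖Δ 0‖^2 * u)
      (fun u => ⟪Δ 0, -(gU (Q₁ u) - gU (Q₂ u))⟫ + (a/2) * ‖Δ 0‖^2)
      (fun u => by
        have h1 := (hasDerivAt_const u (Δ 0)).inner ℝ (hδ' u)
        simp only [inner_zero_left, add_zero] at h1
        exact h1.add (((hasDerivAt_id u).const_mul ((a/2) * ‖Δ 0‖^2)).congr_deriv (by ring)))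
      0 s hs.1
      (fun u hu => by
        have := hsec u ⟨hu.1, le_trans hu.2 hs.2⟩
        simp only [inner_neg_right]
        linarith)
    simp only [hδf0, inner_zero_right, mul_zero, add_zero, zero_add] at key
    linarith [key]
  have hd2 : ⟪Δ 0, Δ t⟫ ≤ ‖Δ 0‖^2 - (a/4) * ‖Δ 0‖^2 * t^2 := by
    have key := le_of_deriv_nonpos' (fun u => ⟪Δ 0, Δ u⟫ + (a/4) * ‖Δ 0‖^2 * u^2)
      (fun u => ⟪Δ 0, δf u⟫ + (a/2) * ‖Δ 0‖^2 * u)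
      (fun u => by
        have h1 := (hasDerivAt_const u (Δ 0)).inner ℝ (hΔ' u)
        simp only [inner_zero_left, add_zero] at h1
        have h2 : HasDerivAt (fun x : ℝ => (a/4) * ‖Δ 0‖^2 * x^2) ((a/2) * ‖Δ 0‖^2 * u) u := by
          have := ((hasDerivAt_pow 2 u).const_mul ((a/4) * ‖Δ 0‖^2))
          exact this.congr_deriv (by push_cast; ring)
        exact h1.add h2)
      0 t ht0
      (fun u hu => by linarith [hd1 u hu])
    simp only [real_inner_self_eq_norm_sq] at key
    have h0 : (0:ℝ)^2 = 0 := by norm_num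
    simp only [h0, mul_zero, add_zero] at key
    linarith [key]
  -- conclude
  have hexpand : ‖Δ t‖^2 = ‖Δ 0‖^2 + 2 * ⟪Δ 0, Δ t - Δ 0⟫ + ‖Δ t - Δ 0‖^2 := by
    have : Δ t = Δ 0 + (Δ t - Δ 0) := by abel
    rw [this, @norm_add_sq_real]
    abel
  have hdev : ‖Δ t - Δ 0‖ ≤ β * Ce * ‖Δ 0‖ * t * t := hΔdev t ⟨ht0, ht1⟩
  have hdevsq : ‖Δ t - Δ 0‖^2 ≤ (a/8) * t^2 * ‖Δ 0‖^2 := by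
    have h1 : ‖Δ t - Δ 0‖^2 ≤ (β * Ce * ‖Δ 0‖ * t * t)^2 := by
      apply sq_le_sq' _ hdev
      have : 0 ≤ β * Ce * ‖Δ 0‖ * t * t := by positivity
      linarith [norm_nonneg (Δ t - Δ 0)]
    have h2 : (β * Ce * ‖Δ 0‖ * t * t)^2 = β^2 * Ce^2 * t^2 * (t^2 * ‖Δ 0‖^2) := by ring
    have ht4 : t^2 ≤ 1 := by nlinarith
    nlinarith [sq_nonneg (t * ‖Δ 0‖), sq_nonneg t, sq_nonneg (‖Δ 0‖)]
  have hmid : ⟪Δ 0, Δ t - Δ 0⟫ = ⟪Δ 0, Δ t⟫ - ‖Δ 0‖^2 := by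
    rw [inner_sub_right, real_inner_self_eq_norm_sq]
  rw [hexpand, hmid]
  nlinarith [hd2, hdevsq]



set_option maxHeartbeats 1000000 in
/-- Lemma 1 (exact flow contraction): for a potential `U ≥ 0`, twice continuously
differentiable with globally `β`-Lipschitz gradient `gU` and `α`-strongly convex on a
compact set `S` of positive Lebesgue measure, and for the Hamiltonian flow `(Q, P)`
solving `dq/dt = p`, `dp/dt = -∇U(q)`, any compact set `A ⊆ S × S × ℝᵈ` admits a
trajectory length `T > 0` such that for any `t ∈ (0, T]` there is `ρ ∈ [0,1)` with
`|Q(q₀¹,p₀,t) - Q(q₀²,p₀,t)| ≤ ρ|q₀¹ - q₀²|` for all `(q₀¹,q₀²,p₀) ∈ A`. -/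
theorem stmt4 (d : ℕ) (α β : ℝ) (hα : 0 < α) (hβ : 0 < β)
    (U : EuclideanSpace ℝ (Fin d) → ℝ) (hU0 : ∀ q, 0 ≤ U q)
    (hU : ContDiff ℝ 2 U)
    (gU : EuclideanSpace ℝ (Fin d) → EuclideanSpace ℝ (Fin d))
    (hgrad : ∀ q, HasGradientAt U (gU q) q)
    (hLip : ∀ q q', ‖gU q - gU q'‖ ≤ β * ‖q - q'‖)
    (S : Set (EuclideanSpace ℝ (Fin d))) (hS : IsCompact S) (hSpos : 0 < volume S)
    (hconv : ∀ q ∈ S, ∀ q' ∈ S, α * ‖q - q'‖ ^ 2 ≤ ⟪q - q', gU q - gU q'⟫)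
    (Q P : EuclideanSpace ℝ (Fin d) → EuclideanSpace ℝ (Fin d) → ℝ →
      EuclideanSpace ℝ (Fin d))
    (hflowq : ∀ q₀ p₀ t, HasDerivAt (Q q₀ p₀) (P q₀ p₀ t) t)
    (hflowp : ∀ q₀ p₀ t, HasDerivAt (P q₀ p₀) (-(gU (Q q₀ p₀ t))) t)
    (hinitq : ∀ q₀ p₀, Q q₀ p₀ 0 = q₀) (hinitp : ∀ q₀ p₀, P q₀ p₀ 0 = p₀)
    (hcont : Continuous fun z : (EuclideanSpace ℝ (Fin d) × EuclideanSpace ℝ (Fin d) × ℝ) =>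
      (Q z.1 z.2.1 z.2.2, P z.1 z.2.1 z.2.2))
    (A : Set (EuclideanSpace ℝ (Fin d) × EuclideanSpace ℝ (Fin d) × EuclideanSpace ℝ (Fin d)))
    (hA : IsCompact A) (hAS : A ⊆ S ×ˢ S ×ˢ Set.univ) :
    ∃ T > 0, ∀ t ∈ Set.Ioc (0 : ℝ) T, ∃ ρ ∈ Set.Ico (0 : ℝ) 1,
      ∀ z ∈ A, ‖Q z.1 z.2.2 t - Q z.2.1 z.2.2 t‖ ≤ ρ * ‖z.1 - z.2.1‖ := by
  classical
  -- gU is C¹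
  have hgC1 : ContDiff ℝ 1 gU := by
    have h1 : gU = fun q => (InnerProductSpace.toDual ℝ _).symm (fderiv ℝ U q) := by
      funext q; rw [(hgrad q).hasFDerivAt.fderiv]; simp
    rw [h1]
    exact (InnerProductSpace.toDual ℝ _).symm.contDiff.comp (hU.fderiv_right (by norm_num))
  have hHcont : Continuous (fderiv ℝ gU) := hgC1.continuous_fderiv one_ne_zero
  -- bound S by a ball
  obtain ⟨R, hR⟩ := hS.isBounded.subset_closedBall 0
  set K := Metric.closedBall (0 : EuclideanSpace ℝ (Fin d)) (R + 1) with hKdef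
  have hKcomp : IsCompact K := isCompact_closedBall _ _
  have hUC := hKcomp.uniformContinuousOn_of_continuous hHcont.continuousOn
  rw [Metric.uniformContinuousOn_iff] at hUC
  obtain ⟨ε, hεpos, hε⟩ := hUC (α/2) (by positivity)
  set δ₁ : ℝ := min (ε/2) 1 with hδ₁def
  have hδ₁pos : 0 < δ₁ := lt_min (by positivity) one_pos
  have hδ₁1 : δ₁ ≤ 1 := min_le_right _ _
  have hδ₁ε : δ₁ ≤ ε/2 := min_le_left _ _
  -- extended convexity near S
  have hconv2 : ∀ q₁ ∈ S, ∀ q₂ ∈ S, ∀ w : EuclideanSpace ℝ (Fin d), ‖w‖ ≤ δ₁ →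
      (α/2) * ‖q₁ - q₂‖^2 ≤ ⟪q₁ - q₂, gU (q₁ + w) - gU (q₂ + w)⟫ := by
    intro q₁ hq₁ q₂ hq₂ w hw
    have hH : ∀ s ∈ Set.Icc (0:ℝ) 1,
        ‖fderiv ℝ gU (q₂ + s•(q₁ - q₂) + w) - fderiv ℝ gU (q₂ + s•(q₁ - q₂))‖ ≤ α/2 := by
      intro s hs
      have hx0 : q₂ + s•(q₁ - q₂) ∈ Metric.closedBall (0 : EuclideanSpace ℝ (Fin d)) R := by
        have hcb := (convex_closedBall (0 : EuclideanSpace ℝ (Fin d)) R)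
          (hR hq₂) (hR hq₁) (by linarith [hs.2] : (0:ℝ) ≤ 1 - s) hs.1 (by ring)
        have heq : (1 - s) • q₂ + s • q₁ = q₂ + s•(q₁ - q₂) := by module
        rwa [heq] at hcb
      have hxK : q₂ + s•(q₁ - q₂) ∈ K := by
        exact Metric.closedBall_subset_closedBall (by linarith) hx0
      have hxnorm : ‖q₂ + s•(q₁ - q₂)‖ ≤ R := by
        rwa [← mem_closedBall_zero_iff]
      have hxwK : q₂ + s•(q₁ - q₂) + w ∈ K := by
        rw [hKdef, mem_closedBall_zero_iff]
        calc ‖q₂ + s•(q₁ - q₂) + w‖ ≤ ‖q₂ + s•(q₁ - q₂)‖ + ‖w‖ := norm_add_le _ _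
          _ ≤ R + 1 := by linarith [le_trans hw hδ₁1]
      have hdist : dist (q₂ + s•(q₁ - q₂) + w) (q₂ + s•(q₁ - q₂)) < ε := by
        rw [dist_eq_norm]
        have : q₂ + s•(q₁ - q₂) + w - (q₂ + s•(q₁ - q₂)) = w := by abel
        rw [this]
        linarith [le_trans hw hδ₁ε]
      have := hε _ hxwK _ hxK hdist
      rw [dist_eq_norm] at this
      linarith
    have hsd := second_diff gU hgC1 q₂ (q₁ - q₂) w (α/2) hH
    have hq : q₂ + (q₁ - q₂) = q₁ := by abel
    rw [hq] at hsd
    have hc0 := hconv q₁ hq₁ q₂ hq₂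
    have hiden : ⟪q₁ - q₂, gU (q₁ + w) - gU (q₂ + w)⟫ = ⟪q₁ - q₂, gU q₁ - gU q₂⟫ +
        (⟪q₁ - q₂, gU (q₁ + w) - gU q₁⟫ - ⟪q₁ - q₂, gU (q₂ + w) - gU q₂⟫) := by
      simp only [inner_sub_right]; ring
    rw [hiden]
    have habs := abs_le.1 hsd
    linarith [habs.1, habs.2, hc0]
  -- momentum bound M
  have hP : Continuous fun z : (EuclideanSpace ℝ (Fin d) × EuclideanSpace ℝ (Fin d) × ℝ) =>
      P z.1 z.2.1 z.2.2 := continuous_snd.comp hcont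
  have hmap1 : Continuous fun zt : ((EuclideanSpace ℝ (Fin d) × EuclideanSpace ℝ (Fin d) ×
      EuclideanSpace ℝ (Fin d)) × ℝ) => ((zt.1.1, zt.1.2.2, zt.2) :
      EuclideanSpace ℝ (Fin d) × EuclideanSpace ℝ (Fin d) × ℝ) := by fun_prop
  have hmap2 : Continuous fun zt : ((EuclideanSpace ℝ (Fin d) × EuclideanSpace ℝ (Fin d) ×
      EuclideanSpace ℝ (Fin d)) × ℝ) => ((zt.1.2.1, zt.1.2.2, zt.2) :
      EuclideanSpace ℝ (Fin d) × EuclideanSpace ℝ (Fin d) × ℝ) := by fun_prop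
  have hPc1 : Continuous fun zt : ((EuclideanSpace ℝ (Fin d) × EuclideanSpace ℝ (Fin d) ×
      EuclideanSpace ℝ (Fin d)) × ℝ) => P zt.1.1 zt.1.2.2 zt.2 := hP.comp hmap1
  have hPc2 : Continuous fun zt : ((EuclideanSpace ℝ (Fin d) × EuclideanSpace ℝ (Fin d) ×
      EuclideanSpace ℝ (Fin d)) × ℝ) => P zt.1.2.1 zt.1.2.2 zt.2 := hP.comp hmap2
  obtain ⟨C₁, hC₁⟩ := (hA.prod (isCompact_Icc (a := (0:ℝ)) (b := 1))).exists_bound_of_continuousOn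
    hPc1.continuousOn
  obtain ⟨C₂, hC₂⟩ := (hA.prod (isCompact_Icc (a := (0:ℝ)) (b := 1))).exists_bound_of_continuousOn
    hPc2.continuousOn
  set M : ℝ := max 0 (max C₁ C₂) with hMdef
  have hM0 : 0 ≤ M := le_max_left _ _
  have hMC1 : C₁ ≤ M := le_trans (le_max_left _ _) (le_max_right _ _)
  have hMC2 : C₂ ≤ M := le_trans (le_max_right _ _) (le_max_right _ _)
  -- deviation bound for second trajectory
  have hdev2 : ∀ z ∈ A, ∀ s ∈ Set.Icc (0:ℝ) 1, ‖Q z.2.1 z.2.2 s - z.2.1‖ ≤ M * s := by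
    intro z hz s hs
    have := mvt_norm' (Q z.2.1 z.2.2) (P z.2.1 z.2.2) (hflowq _ _) s M hs.1
      (fun u hu => le_trans (hC₂ (z, u) (Set.mk_mem_prod hz ⟨hu.1, le_trans hu.2 hs.2⟩)) hMC2)
    rwa [hinitq] at this
  -- constants
  set Ce : ℝ := Real.exp (1 + β) with hCedef
  have hCe1 : (1:ℝ) ≤ Ce := Real.one_le_exp (by linarith)
  have hCe0 : (0:ℝ) < Ce := lt_of_lt_of_le one_pos hCe1
  refine ⟨min 1 (min (δ₁/(M+1)) (min (Real.sqrt ((α/2/2)/(β^2*Ce)))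
    (min (Real.sqrt ((α/2/8)/(β^2*Ce^2))) (Real.sqrt (8/α))))), ?_, ?_⟩
  · refine lt_min one_pos (lt_min (by positivity) (lt_min ?_ (lt_min ?_ ?_))) <;>
      exact Real.sqrt_pos.2 (by positivity)
  intro t ht
  have ht0 : (0:ℝ) < t := ht.1
  have ht1 : t ≤ 1 := le_trans ht.2 (min_le_left _ _)
  have htb := le_trans ht.2 (min_le_right _ _)
  have htδ : t ≤ δ₁/(M+1) := le_trans htb (min_le_left _ _)
  have htc := le_trans htb (min_le_right _ _)
  have hts1 : t ≤ Real.sqrt ((α/2/2)/(β^2*Ce)) := le_trans htc (min_le_left _ _)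
  have htd := le_trans htc (min_le_right _ _)
  have hts2 : t ≤ Real.sqrt ((α/2/8)/(β^2*Ce^2)) := le_trans htd (min_le_left _ _)
  have hts3 : t ≤ Real.sqrt (8/α) := le_trans htd (min_le_right _ _)
  have sqle : ∀ X : ℝ, 0 ≤ X → t ≤ Real.sqrt X → t^2 ≤ X := by
    intro X hX h
    nlinarith [Real.sq_sqrt hX, Real.sqrt_nonneg X, ht0.le]
  have ht2 : β^2 * Ce * t^2 ≤ α/2/2 := by
    have := sqle _ (by positivity) hts1
    rw [le_div_iff₀ (by positivity)] at this
    linarith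
  have ht3 : β^2 * Ce^2 * t^2 ≤ α/2/8 := by
    have := sqle _ (by positivity) hts2
    rw [le_div_iff₀ (by positivity)] at this
    linarith
  have ht4 : t^2 ≤ 8/α := sqle _ (by positivity) hts3
  have hMt : M * t ≤ δ₁ := by
    have hM1 : (0:ℝ) < M + 1 := by linarith
    have h1 : M * t ≤ M * (δ₁/(M+1)) := mul_le_mul_of_nonneg_left htδ hM0
    have h2 : M * (δ₁/(M+1)) ≤ δ₁ := by
      rw [div_eq_mul_inv]
      rw [show M * (δ₁ * (M+1)⁻¹) = δ₁ * (M * (M+1)⁻¹) by ring]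
      have h3 : M * (M+1)⁻¹ ≤ 1 := by
        rw [← div_eq_mul_inv, div_le_one hM1]; linarith
      exact mul_le_of_le_one_right hδ₁pos.le h3
    linarith
  have harg0 : (0:ℝ) ≤ 1 - α/2/8 * t^2 := by
    have h8 : t^2 * α ≤ 8 := (le_div_iff₀ hα).1 ht4
    nlinarith
  refine ⟨Real.sqrt (1 - α/2/8 * t^2), ⟨Real.sqrt_nonneg _, ?_⟩, ?_⟩
  · have hlt : 1 - α/2/8 * t^2 < 1 := by nlinarith [mul_pos hα (mul_pos ht0 ht0)]
    nlinarith [Real.sq_sqrt harg0, Real.sqrt_nonneg (1 - α/2/8 * t^2)]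
  intro z hz
  have hq1S : z.1 ∈ S := (hAS hz).1
  have hq2S : z.2.1 ∈ S := (hAS hz).2.1
  have key := aux_contract gU β Ce M δ₁ (α/2) hβ (by positivity) hM0 le_rfl hCe1 hLip
    (Q z.1 z.2.2) (Q z.2.1 z.2.2) (P z.1 z.2.2) (P z.2.1 z.2.2)
    (hflowq _ _) (hflowq _ _) (hflowp _ _) (hflowp _ _)
    (by simp only [hinitp])
    (fun s hs => by simp only [hinitq]; exact hdev2 z hz s hs)
    (fun w hw => by simp only [hinitq]; exact hconv2 z.1 hq1S z.2.1 hq2S w hw)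
    t ht0.le ht1 hMt ht2 ht3
  simp only [hinitq] at key
  calc ‖Q z.1 z.2.2 t - Q z.2.1 z.2.2 t‖
      = Real.sqrt (‖Q z.1 z.2.2 t - Q z.2.1 z.2.2 t‖^2) := (Real.sqrt_sq (norm_nonneg _)).symm
    _ ≤ Real.sqrt ((1 - α/2/8 * t^2) * ‖z.1 - z.2.1‖^2) := Real.sqrt_le_sqrt key
    _ = Real.sqrt (1 - α/2/8 * t^2) * ‖z.1 - z.2.1‖ := by
        rw [Real.sqrt_mul harg0, Real.sqrt_sq (norm_nonneg _)]
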